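/- For every real β > 1, the function t ↦ (∑_{n=1}^∞ n^{-β} t^{α(n)})^{-1} belongs to L²(𝕋^ω, dt) (and hence to L¹(𝕋^ω, dt)). -/

import Mathlib

open MeasureTheory Filter Finset
open scoped LSeries.notation ArithmeticFunction ArithmeticFunction.Moebius ArithmeticFunction.zeta

noncomputable section

instance : MeasurableSpace Circle := borel Circle
instance : BorelSpace Circle := ⟨rfl⟩

/-- The infinite-dimensional torus `𝕋^ω`, a countable product of unit circles. -/
abbrev Torus : Type := ℕ → Circle

/-- `pprime j` is the `j`-th prime (`0`-indexed, so `pprime 0 = 2`). -/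
def pprime (j : ℕ) : ℕ := Nat.nth Nat.Prime j

/-- `expOf n j` is `α_j(n)`, the exponent of the `j`-th prime in the factorization of `n`. -/
def expOf (n j : ℕ) : ℕ := n.factorization (pprime j)

/-- `tpow t n = t^{α(n)} = ∏_j t_j^{α_j(n)}`, a finite product. -/
def tpow (t : Torus) (n : ℕ) : ℂ := ∏ᶠ j, ((t j : ℂ) ^ expOf n j)

lemma le_pprime (j : ℕ) : j ≤ pprime j :=
  (Nat.nth_strictMono Nat.infinite_setOf_prime).le_apply

lemma mulSupport_subset (t : Torus) (n : ℕ) :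
    (Function.mulSupport fun j => ((t j : ℂ) ^ expOf n j)) ⊆ ↑(Finset.range (n + 1)) := by
  intro j hj
  simp only [Finset.coe_range, Set.mem_Iio]
  by_contra h
  push_neg at h
  have hlt : n < pprime j := lt_of_lt_of_le (Nat.lt_of_succ_le h) (le_pprime j)
  have : expOf n j = 0 := Nat.factorization_eq_zero_of_lt hlt
  exact hj (by simp [this])

lemma tpow_eq_prod (t : Torus) (n : ℕ) {s : Finset ℕ} (hs : Finset.range (n+1) ⊆ s) :
    tpow t n = ∏ j ∈ s, ((t j : ℂ) ^ expOf n j) :=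
  finprod_eq_prod_of_mulSupport_subset _ <|
    (mulSupport_subset t n).trans (Finset.coe_subset.mpr hs)

lemma norm_tpow (t : Torus) (n : ℕ) : ‖tpow t n‖ = 1 := by
  rw [tpow_eq_prod t n (le_refl _), norm_prod]
  refine Finset.prod_eq_one fun j _ => ?_
  rw [norm_pow]
  simp [Circle.norm_coe]

lemma tpow_one (t : Torus) : tpow t 1 = 1 := by
  rw [tpow_eq_prod t 1 (le_refl _)]
  refine Finset.prod_eq_one fun j _ => ?_
  have : expOf 1 j = 0 := by simp [expOf]
  simp [this]

lemma tpow_mul (t : Torus) {m n : ℕ} (hm : m ≠ 0) (hn : n ≠ 0) :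
    tpow t (m * n) = tpow t m * tpow t n := by
  have hmle : m + 1 ≤ m * n + 1 := by
    have := Nat.le_mul_of_pos_right m (Nat.pos_of_ne_zero hn); omega
  have hnle : n + 1 ≤ m * n + 1 := by
    have := Nat.le_mul_of_pos_left n (Nat.pos_of_ne_zero hm); omega
  rw [tpow_eq_prod t (m*n) (le_refl _),
    tpow_eq_prod t m (Finset.range_subset_range.mpr hmle),
    tpow_eq_prod t n (Finset.range_subset_range.mpr hnle), ← Finset.prod_mul_distrib]
  refine Finset.prod_congr rfl fun j _ => ?_
  have : expOf (m*n) j = expOf m j + expOf n j := by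
    simp [expOf, Nat.factorization_mul hm hn]
  rw [this, pow_add]

def Ft (t : Torus) : ℕ → ℂ := fun n => if n = 0 then 0 else tpow t n
def Gt (t : Torus) : ℕ → ℂ := fun n => ((μ n : ℤ) : ℂ) * tpow t n

lemma sum_moebius_snd {n : ℕ} (hn : n ≠ 0) :
    ∑ p ∈ n.divisorsAntidiagonal, ((μ p.2 : ℤ) : ℂ) = if n = 1 then 1 else 0 := by
  have h : (↑ζ * ↑μ : ArithmeticFunction ℂ) n = (1 : ArithmeticFunction ℂ) n := by
    rw [ArithmeticFunction.coe_zeta_mul_coe_moebius]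
  rw [ArithmeticFunction.mul_apply] at h
  rw [← ArithmeticFunction.one_apply (R := ℂ) (x := n), ← h]
  refine Finset.sum_congr rfl fun p hp => ?_
  obtain ⟨h1, h2⟩ := Nat.ne_zero_of_mem_divisorsAntidiagonal hp
  simp [ArithmeticFunction.natCoe_apply, ArithmeticFunction.zeta_apply, h1,
    ArithmeticFunction.intCoe_apply]

lemma conv_eq_delta (t : Torus) : Ft t ⍟ Gt t = LSeries.delta := by
  funext n
  rcases eq_or_ne n 0 with rfl | hn
  · simp [LSeries.delta]
  simp only [LSeries.convolution_def]
  have : ∀ p ∈ n.divisorsAntidiagonal, Ft t p.1 * Gt t p.2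
      = ((μ p.2 : ℤ) : ℂ) * tpow t n := by
    intro p hp
    obtain ⟨h1, h2⟩ := Nat.ne_zero_of_mem_divisorsAntidiagonal hp
    have hmul : tpow t p.1 * tpow t p.2 = tpow t n := by
      rw [← tpow_mul t h1 h2, (Nat.mem_divisorsAntidiagonal.mp hp).1]
    simp only [Ft, Gt, if_neg h1]
    rw [show tpow t p.1 * (((μ p.2 : ℤ) : ℂ) * tpow t p.2)
        = ((μ p.2 : ℤ) : ℂ) * (tpow t p.1 * tpow t p.2) by ring, hmul]
  rw [Finset.sum_congr rfl this, ← Finset.sum_mul, sum_moebius_snd hn]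
  rcases eq_or_ne n 1 with rfl | h1
  · simp [LSeries.delta, tpow_one]
  · simp [LSeries.delta, h1]

lemma hFsummable (t : Torus) {β : ℝ} (hβ : 1 < β) : LSeriesSummable (Ft t) (β : ℂ) :=
  LSeriesSummable_of_bounded_of_one_lt_real (m := 1)
    (fun n hn => by
      simp only [Ft, if_neg hn, norm_tpow]; exact le_refl 1) hβ

lemma norm_Gt_le (t : Torus) (n : ℕ) : ‖Gt t n‖ ≤ 1 := by
  rw [Gt, norm_mul, norm_tpow, mul_one]
  rw [Complex.norm_intCast]
  exact_mod_cast ArithmeticFunction.abs_moebius_le_one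

lemma hGsummable (t : Torus) {β : ℝ} (hβ : 1 < β) : LSeriesSummable (Gt t) (β : ℂ) :=
  LSeriesSummable_of_bounded_of_one_lt_real (m := 1)
    (fun n _ => by exact norm_Gt_le t n) hβ

lemma cast_pow_eq (n : ℕ) (β : ℝ) :
    (Complex.ofReal (((n : ℝ) + 1) ^ β)) = ((n + 1 : ℕ) : ℂ) ^ (β : ℂ) := by
  rw [Complex.ofReal_cpow (by positivity)]
  push_cast
  ring_nf

lemma LSeries_eq_shift (f : ℕ → ℂ) {β : ℝ} (hf : LSeriesSummable f (β : ℂ)) :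
    LSeries f (β : ℂ) = ∑' n : ℕ, f (n + 1) / Complex.ofReal (((n : ℝ) + 1) ^ β) := by
  rw [LSeries, hf.tsum_eq_zero_add, LSeries.term_zero, zero_add]
  refine tsum_congr fun n => ?_
  rw [LSeries.term_of_ne_zero (Nat.succ_ne_zero n), cast_pow_eq]

lemma summable_u {β : ℝ} (hβ : 1 < β) :
    Summable (fun n : ℕ => (((n : ℝ) + 1) ^ β)⁻¹) := by
  have h1 := Real.summable_nat_rpow_inv.mpr hβ
  have h2 := (summable_nat_add_iff 1).mpr h1
  refine h2.congr fun n => ?_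
  push_cast
  ring_nf

lemma continuous_tpow (n : ℕ) : Continuous fun t : Torus => tpow t n := by
  have : (fun t : Torus => tpow t n)
      = fun t => ∏ j ∈ Finset.range (n + 1), ((t j : ℂ) ^ expOf n j) :=
    funext fun t => tpow_eq_prod t n (le_refl _)
  rw [this]
  exact continuous_finset_prod _ fun j _ =>
    (continuous_subtype_val.comp (continuous_apply j)).pow _
/-- For every real `β > 1`, the function `t ↦ (∑_{n=1}^∞ n^{-β} t^{α(n)})⁻¹` belongs to
`L²(𝕋^ω, dt)` (and hence to `L¹(𝕋^ω, dt)`), where `dt` is the normalized Haar measure. -/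
theorem inv_zeta_series_memLp_two (β : ℝ) (hβ : 1 < β)
    (ν : Measure Torus) [ν.IsHaarMeasure] [IsProbabilityMeasure ν] :
    MemLp (fun t : Torus =>
      (∑' n : ℕ, tpow t (n + 1) / (Complex.ofReal (((n : ℝ) + 1) ^ β)))⁻¹) 2 ν ∧
    MemLp (fun t : Torus =>
      (∑' n : ℕ, tpow t (n + 1) / (Complex.ofReal (((n : ℝ) + 1) ^ β)))⁻¹) 1 ν := by
  have hfun : (fun t : Torus =>
      (∑' n : ℕ, tpow t (n + 1) / (Complex.ofReal (((n : ℝ) + 1) ^ β)))⁻¹)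
      = fun t : Torus => ∑' n : ℕ, Gt t (n + 1) / Complex.ofReal (((n : ℝ) + 1) ^ β) := by
    funext t
    have hA : (∑' n : ℕ, tpow t (n + 1) / Complex.ofReal (((n : ℝ) + 1) ^ β))
        = LSeries (Ft t) (β : ℂ) := by
      rw [LSeries_eq_shift _ (hFsummable t hβ)]
      exact tsum_congr fun n => by simp [Ft]
    have hM : (∑' n : ℕ, Gt t (n + 1) / Complex.ofReal (((n : ℝ) + 1) ^ β))
        = LSeries (Gt t) (β : ℂ) :=
      (LSeries_eq_shift _ (hGsummable t hβ)).symm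
    rw [hA, hM]
    refine inv_eq_of_mul_eq_one_right ?_
    rw [← LSeries_convolution' (hFsummable t hβ) (hGsummable t hβ), conv_eq_delta,
      LSeries_delta, Pi.one_apply]
  have hbdd : ∀ (n : ℕ) (t : Torus),
      ‖Gt t (n + 1) / Complex.ofReal (((n : ℝ) + 1) ^ β)‖ ≤ (((n : ℝ) + 1) ^ β)⁻¹ := by
    intro n t
    rw [norm_div, Complex.norm_real, Real.norm_of_nonneg (by positivity)]
    calc ‖Gt t (n + 1)‖ / ((n : ℝ) + 1) ^ β ≤ 1 / ((n : ℝ) + 1) ^ β := by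
          gcongr
          exact norm_Gt_le t (n + 1)
      _ = _ := one_div _
  have hcont : Continuous fun t : Torus =>
      ∑' n : ℕ, Gt t (n + 1) / Complex.ofReal (((n : ℝ) + 1) ^ β) := by
    refine continuous_tsum (fun n => ?_) (summable_u hβ) (fun n t => hbdd n t)
    exact (continuous_const.mul (continuous_tpow (n + 1))).div_const _
  set B : ℝ := ∑' n : ℕ, (((n : ℝ) + 1) ^ β)⁻¹ with hB
  have hbound : ∀ t : Torus,
      ‖∑' n : ℕ, Gt t (n + 1) / Complex.ofReal (((n : ℝ) + 1) ^ β)‖ ≤ B := by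
    intro t
    have hs : Summable fun n : ℕ =>
        ‖Gt t (n + 1) / Complex.ofReal (((n : ℝ) + 1) ^ β)‖ :=
      (summable_u hβ).of_nonneg_of_le (fun n => norm_nonneg _) (fun n => hbdd n t)
    exact (norm_tsum_le_tsum_norm hs).trans
      (Summable.tsum_le_tsum (fun n => hbdd n t) hs (summable_u hβ))
  rw [hfun]
  exact ⟨MemLp.of_bound hcont.aestronglyMeasurable B (ae_of_all _ hbound),
    MemLp.of_bound hcont.aestronglyMeasurable B (ae_of_all _ hbound)⟩
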